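/- Let b ∈ ℝ^d have all components positive, let b_min denote its smallest component, fix P_max ≥ 2·R_max/b_min, and let 𝒫 = [0, P_max]^d. Then max over w in the probability simplex Δ_K of min over p ∈ 𝒫 of (⟨p, b⟩ + ∑_{θ=1}^K w_θ · g_θ(p)) equals min over p ∈ 𝒫 of (⟨p, b⟩ + max_{θ ∈ {1,…,K}} g_θ(p)). -/

import Mathlib

open MeasureTheory

/-- Surplus function `g_θ(p) = E_{(r,a)∼D}[(r − ⟨p,a⟩)₊]`. -/
noncomputable def surplus {d : ℕ} (D : Measure (ℝ × (Fin d → ℝ))) (p : Fin d → ℝ) : ℝ :=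
  ∫ z, max (z.1 - ∑ i, p i * z.2 i) 0 ∂D

lemma surplus_nonneg {d : ℕ} (D : Measure (ℝ × (Fin d → ℝ))) (p : Fin d → ℝ) :
    0 ≤ surplus D p :=
  integral_nonneg fun _ => le_max_right _ _

lemma surplus_integrable {d : ℕ} (D : Measure (ℝ × (Fin d → ℝ)))
    [IsProbabilityMeasure D] {Rmax Amax : ℝ}
    (hDs : ∀ᵐ z ∂ D, 0 ≤ z.1 ∧ z.1 ≤ Rmax ∧ ∀ i, 0 ≤ z.2 i ∧ z.2 i ≤ Amax)
    (hR : 0 < Rmax) (p : Fin d → ℝ) (hp : ∀ i, 0 ≤ p i) :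
    Integrable (fun z : ℝ × (Fin d → ℝ) => max (z.1 - ∑ i, p i * z.2 i) 0) D := by
  have hcont : Continuous (fun z : ℝ × (Fin d → ℝ) => max (z.1 - ∑ i, p i * z.2 i) 0) := by
    apply Continuous.max _ continuous_const
    apply continuous_fst.sub
    exact continuous_finset_sum _ fun i _ => continuous_const.mul ((continuous_apply i).comp continuous_snd)
  refine Integrable.mono' (integrable_const Rmax) hcont.aestronglyMeasurable ?_
  filter_upwards [hDs] with z hz
  rcases hz with ⟨hz0, hzR, hza⟩
  have hsum : 0 ≤ ∑ i, p i * z.2 i :=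
    Finset.sum_nonneg fun i _ => mul_nonneg (hp i) (hza i).1
  rw [Real.norm_eq_abs, abs_of_nonneg (le_max_right _ _)]
  exact max_le (by linarith) hR.le

lemma surplus_convex {d : ℕ} (D : Measure (ℝ × (Fin d → ℝ)))
    [IsProbabilityMeasure D] {Rmax Amax : ℝ}
    (hDs : ∀ᵐ z ∂ D, 0 ≤ z.1 ∧ z.1 ≤ Rmax ∧ ∀ i, 0 ≤ z.2 i ∧ z.2 i ≤ Amax)
    (hR : 0 < Rmax) (p q : Fin d → ℝ) (hp : ∀ i, 0 ≤ p i) (hq : ∀ i, 0 ≤ q i)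
    {t s : ℝ} (ht : 0 ≤ t) (hs : 0 ≤ s) (hts : t + s = 1) :
    surplus D (fun i => t * p i + s * q i) ≤ t * surplus D p + s * surplus D q := by
  have hip := surplus_integrable D hDs hR p hp
  have hiq := surplus_integrable D hDs hR q hq
  have key : surplus D (fun i => t * p i + s * q i)
      ≤ ∫ z, (t * max (z.1 - ∑ i, p i * z.2 i) 0 + s * max (z.1 - ∑ i, q i * z.2 i) 0) ∂D := by
    apply integral_mono_of_nonneg
    · exact Filter.Eventually.of_forall fun z => le_max_right _ _
    · exact (hip.const_mul t).add (hiq.const_mul s)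
    · apply Filter.Eventually.of_forall
      intro z
      dsimp only
      have h1 : z.1 - ∑ i, (t * p i + s * q i) * z.2 i
          = t * (z.1 - ∑ i, p i * z.2 i) + s * (z.1 - ∑ i, q i * z.2 i) := by
        have hsumeq : ∑ i, (t * p i + s * q i) * z.2 i
            = t * (∑ i, p i * z.2 i) + s * (∑ i, q i * z.2 i) := by
          rw [Finset.mul_sum, Finset.mul_sum, ← Finset.sum_add_distrib]
          exact Finset.sum_congr rfl fun i _ => by ring
        rw [hsumeq]
        linear_combination (-z.1) * hts
      have hA : t * (z.1 - ∑ i, p i * z.2 i) ≤ t * max (z.1 - ∑ i, p i * z.2 i) 0 :=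
        mul_le_mul_of_nonneg_left (le_max_left _ _) ht
      have hB : s * (z.1 - ∑ i, q i * z.2 i) ≤ s * max (z.1 - ∑ i, q i * z.2 i) 0 :=
        mul_le_mul_of_nonneg_left (le_max_left _ _) hs
      have h0 : 0 ≤ t * max (z.1 - ∑ i, p i * z.2 i) 0 + s * max (z.1 - ∑ i, q i * z.2 i) 0 :=
        add_nonneg (mul_nonneg ht (le_max_right _ _)) (mul_nonneg hs (le_max_right _ _))
      exact max_le (by rw [h1]; linarith) h0
  calc surplus D (fun i => t * p i + s * q i)
      ≤ ∫ z, (t * max (z.1 - ∑ i, p i * z.2 i) 0 + s * max (z.1 - ∑ i, q i * z.2 i) 0) ∂D := key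
    _ = t * surplus D p + s * surplus D q := by
        rw [integral_add (hip.const_mul t) (hiq.const_mul s),
          integral_const_mul, integral_const_mul]
        rfl

theorem stmt0 (K d : ℕ) (hK : 1 ≤ K) (hd : 1 ≤ d)
    (Rmax Amax : ℝ) (hR : 0 < Rmax) (hA : 0 < Amax)
    (D : Fin K → Measure (ℝ × (Fin d → ℝ)))
    (hDp : ∀ θ, IsProbabilityMeasure (D θ))
    (hDs : ∀ θ, ∀ᵐ z ∂ D θ, 0 ≤ z.1 ∧ z.1 ≤ Rmax ∧ ∀ i, 0 ≤ z.2 i ∧ z.2 i ≤ Amax)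
    (b : Fin d → ℝ) (hb : ∀ i, 0 < b i)
    (bmin : ℝ) (hbmin : IsLeast (Set.range b) bmin)
    (Pmax : ℝ) (hP : 2 * Rmax / bmin ≤ Pmax) :
    sSup ((fun w => sInf ((fun p => (∑ i, p i * b i) + ∑ θ, w θ * surplus (D θ) p) ''
          {p : Fin d → ℝ | ∀ i, p i ∈ Set.Icc 0 Pmax})) ''
        {w : Fin K → ℝ | (∀ θ, 0 ≤ w θ) ∧ ∑ θ, w θ = 1})
      = sInf ((fun p => (∑ i, p i * b i) + sSup (Set.range fun θ => surplus (D θ) p)) ''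
          {p : Fin d → ℝ | ∀ i, p i ∈ Set.Icc 0 Pmax}) := by
  haveI := hDp
  haveI : NeZero K := ⟨by omega⟩
  -- basic positivity
  have hbmin_pos : 0 < bmin := by
    obtain ⟨⟨i, hi⟩, _⟩ := hbmin
    exact hi ▸ hb i
  have hPmax_pos : 0 < Pmax :=
    lt_of_lt_of_le (by positivity) hP
  -- notation
  set P : Set (Fin d → ℝ) := {p : Fin d → ℝ | ∀ i, p i ∈ Set.Icc 0 Pmax} with hPdef
  set f : Fin K → (Fin d → ℝ) → ℝ := fun θ p => (∑ i, p i * b i) + surplus (D θ) p with hfdef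
  set F : (Fin d → ℝ) → ℝ := fun p => (∑ i, p i * b i) + sSup (Set.range fun θ => surplus (D θ) p) with hFdef
  set Δ : Set (Fin K → ℝ) := {w : Fin K → ℝ | (∀ θ, 0 ≤ w θ) ∧ ∑ θ, w θ = 1} with hΔdef
  have h0P : (0 : Fin d → ℝ) ∈ P := fun i => ⟨le_refl _, hPmax_pos.le⟩
  have hPne : P.Nonempty := ⟨0, h0P⟩
  have hlin_nonneg : ∀ p ∈ P, 0 ≤ ∑ i, p i * b i := fun p hp =>
    Finset.sum_nonneg fun i _ => mul_nonneg (hp i).1 (hb i).le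
  have hf_nonneg : ∀ θ, ∀ p ∈ P, 0 ≤ f θ p := fun θ p hp =>
    add_nonneg (hlin_nonneg p hp) (surplus_nonneg _ _)
  have hrange_bdd : ∀ p, BddAbove (Set.range fun θ => surplus (D θ) p) := fun p =>
    (Set.finite_range _).bddAbove
  have hrange_ne : ∀ p : Fin d → ℝ, (Set.range fun θ => surplus (D θ) p).Nonempty := fun p =>
    Set.range_nonempty _
  have hF_nonneg : ∀ p ∈ P, 0 ≤ F p := fun p hp =>
    add_nonneg (hlin_nonneg p hp) (Real.sSup_nonneg (by rintro x ⟨θ, rfl⟩; exact surplus_nonneg _ _))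
  have hFP_ne : (F '' P).Nonempty := hPne.image F
  have hFP_bdd : BddBelow (F '' P) := ⟨0, by rintro x ⟨p, hp, rfl⟩; exact hF_nonneg p hp⟩
  set V : ℝ := sInf (F '' P) with hVdef
  -- f ≤ F on P
  have hfF : ∀ θ, ∀ p, f θ p ≤ F p := fun θ p =>
    add_le_add (le_refl _) (le_csSup (hrange_bdd p) ⟨θ, rfl⟩)
  -- upper bound: for each w ∈ Δ, its value is ≤ V
  have hupper : ∀ w ∈ Δ, sInf ((fun p => (∑ i, p i * b i) + ∑ θ, w θ * surplus (D θ) p) '' P) ≤ V := by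
    intro w hw
    apply le_csInf hFP_ne
    rintro x ⟨p, hp, rfl⟩
    have h1 : sInf ((fun p => (∑ i, p i * b i) + ∑ θ, w θ * surplus (D θ) p) '' P)
        ≤ (∑ i, p i * b i) + ∑ θ, w θ * surplus (D θ) p := by
      apply csInf_le
      · refine ⟨0, ?_⟩
        rintro x ⟨q, hq, rfl⟩
        exact add_nonneg (hlin_nonneg q hq)
          (Finset.sum_nonneg fun θ _ => mul_nonneg (hw.1 θ) (surplus_nonneg _ _))
      · exact ⟨p, hp, rfl⟩
    refine h1.trans (add_le_add (le_refl _) ?_)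
    calc ∑ θ, w θ * surplus (D θ) p
        ≤ ∑ θ, w θ * sSup (Set.range fun θ => surplus (D θ) p) :=
          Finset.sum_le_sum fun θ _ =>
            mul_le_mul_of_nonneg_left (le_csSup (hrange_bdd p) ⟨θ, rfl⟩) (hw.1 θ)
      _ = sSup (Set.range fun θ => surplus (D θ) p) := by
          rw [← Finset.sum_mul, hw.2, one_mul]
  -- the convex sets for separation
  set C : Set (Fin K → ℝ) := {x | ∃ p ∈ P, ∀ θ, f θ p ≤ x θ} with hCdef
  set B : Set (Fin K → ℝ) := {x | ∀ θ, x θ < V} with hBdef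
  have hP_convex : ∀ p ∈ P, ∀ q ∈ P, ∀ t s : ℝ, 0 ≤ t → 0 ≤ s → t + s = 1 →
      (fun i => t * p i + s * q i) ∈ P := by
    intro p hp q hq t s ht hs hts i
    constructor
    · exact add_nonneg (mul_nonneg ht (hp i).1) (mul_nonneg hs (hq i).1)
    · calc t * p i + s * q i ≤ t * Pmax + s * Pmax :=
            add_le_add (mul_le_mul_of_nonneg_left (hp i).2 ht)
              (mul_le_mul_of_nonneg_left (hq i).2 hs)
        _ = Pmax := by rw [← add_mul, hts, one_mul]
  have hf_convex : ∀ θ, ∀ p ∈ P, ∀ q ∈ P, ∀ t s : ℝ, 0 ≤ t → 0 ≤ s → t + s = 1 →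
      f θ (fun i => t * p i + s * q i) ≤ t * f θ p + s * f θ q := by
    intro θ p hp q hq t s ht hs hts
    have hlin : (∑ i, (t * p i + s * q i) * b i)
        = t * (∑ i, p i * b i) + s * (∑ i, q i * b i) := by
      rw [Finset.mul_sum, Finset.mul_sum, ← Finset.sum_add_distrib]
      exact Finset.sum_congr rfl fun i _ => by ring
    have hsur := surplus_convex (D θ) (hDs θ) hR p q (fun i => (hp i).1) (fun i => (hq i).1) ht hs hts
    simp only [hfdef, hlin]
    linarith
  have hC_convex : Convex ℝ C := by
    rintro x hx y hy t s ht hs hts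
    obtain ⟨p, hp, hxp⟩ := hx
    obtain ⟨q, hq, hyq⟩ := hy
    refine ⟨fun i => t * p i + s * q i, hP_convex p hp q hq t s ht hs hts, fun θ => ?_⟩
    have := hf_convex θ p hp q hq t s ht hs hts
    have h2 : t * f θ p + s * f θ q ≤ t * x θ + s * y θ :=
      add_le_add (mul_le_mul_of_nonneg_left (hxp θ) ht) (mul_le_mul_of_nonneg_left (hyq θ) hs)
    calc f θ (fun i => t * p i + s * q i) ≤ t * x θ + s * y θ := this.trans h2
      _ = (t • x + s • y) θ := by simp [smul_eq_mul]
  have hB_convex : Convex ℝ B := by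
    rintro x hx y hy t s ht hs hts θ
    have := (convex_Iio V) (hx θ) (hy θ) ht hs hts
    simpa [smul_eq_mul] using this
  have hB_open : IsOpen B := by
    have : B = Set.pi Set.univ (fun _ : Fin K => Set.Iio V) := by
      ext x; simp [hBdef, Set.mem_pi]
    rw [this]
    exact isOpen_set_pi Set.finite_univ fun _ _ => isOpen_Iio
  have hdisj : Disjoint B C := by
    rw [Set.disjoint_left]
    rintro x hxB ⟨p, hp, hle⟩
    have hmem : sSup (Set.range fun θ => surplus (D θ) p) ∈ Set.range fun θ => surplus (D θ) p :=
      (hrange_ne p).csSup_mem (Set.finite_range _)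
    obtain ⟨θ0, hθ0⟩ := hmem
    have hVF : V ≤ F p := csInf_le hFP_bdd ⟨p, hp, rfl⟩
    have : F p = f θ0 p := by simp [hFdef, hfdef, ← hθ0]
    have : V ≤ x θ0 := by
      calc V ≤ F p := hVF
        _ = f θ0 p := this
        _ ≤ x θ0 := hle θ0
    exact absurd (hxB θ0) (not_lt.mpr this)
  -- separation
  obtain ⟨φ, u, hBu, hCu⟩ := geometric_hahn_banach_open hB_convex hB_open hC_convex hdisj
  set c : Fin K → ℝ := fun θ => φ ((Pi.single θ 1 : Fin K → ℝ)) with hcdef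
  have hφx : ∀ x : Fin K → ℝ, φ x = ∑ θ, x θ * c θ := by
    intro x
    have hx : x = ∑ θ, x θ • (Pi.single θ 1 : Fin K → ℝ) := by
      funext j
      simp [Finset.sum_apply, Pi.single_apply]
    conv_lhs => rw [hx]
    rw [map_sum]
    exact Finset.sum_congr rfl fun θ _ => by rw [φ.map_smul]; simp [smul_eq_mul]; exact Or.inl rfl
  -- membership facts
  have hBmem : ∀ ε > (0:ℝ), (fun _ : Fin K => V - ε) ∈ B := fun ε hε θ => by
    show V - ε < V; linarith
  have hCne : ∃ x ∈ C, True := ⟨fun θ => f θ 0, ⟨0, h0P, fun θ => le_refl _⟩, trivial⟩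
  -- c is nonnegative
  have hc_nonneg : ∀ θ, 0 ≤ c θ := by
    intro θ
    by_contra hneg
    push_neg at hneg
    have hy : (fun _ : Fin K => V - 1) ∈ B := hBmem 1 one_pos
    have hφy : φ (fun _ : Fin K => V - 1) < u := hBu _ hy
    set t : ℝ := (u - φ (fun _ : Fin K => V - 1) + 1) / (-c θ) with htdef
    have ht_pos : 0 < t := div_pos (by linarith) (by linarith)
    have hx1 : ((fun _ : Fin K => V - 1) - t • (Pi.single θ 1 : Fin K → ℝ)) ∈ B := by
      intro θ'
      simp only [Pi.sub_apply, Pi.smul_apply, Pi.single_apply, smul_eq_mul]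
      by_cases h : θ' = θ
      · simp [h]; linarith
      · simp [h]
    have := hBu _ hx1
    rw [φ.map_sub, φ.map_smul, smul_eq_mul] at this
    have hcne : c θ ≠ 0 := hneg.ne
    have htc : t * -c θ = u - φ (fun _ : Fin K => V - 1) + 1 :=
      div_mul_cancel₀ _ (neg_ne_zero.mpr hcne)
    rw [show φ ((Pi.single θ 1 : Fin K → ℝ)) = c θ from rfl] at this
    linarith
  -- some c is positive
  have hc_sum_pos : 0 < ∑ θ, c θ := by
    by_contra hle
    push_neg at hle
    have hzero : ∀ θ, c θ = 0 := by
      intro θ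
      have h1 : ∑ θ, c θ = 0 :=
        le_antisymm hle (Finset.sum_nonneg fun θ _ => hc_nonneg θ)
      exact (Finset.sum_eq_zero_iff_of_nonneg (fun θ _ => hc_nonneg θ)).mp h1 θ (Finset.mem_univ θ)
    obtain ⟨x0, hx0, -⟩ := hCne
    have h1 : φ (fun _ : Fin K => V - 1) < u := hBu _ (hBmem 1 one_pos)
    have h2 : u ≤ φ x0 := hCu _ hx0
    rw [hφx] at h1 h2
    simp [hzero] at h1 h2
    linarith
  set S : ℝ := ∑ θ, c θ with hSdef
  set w : Fin K → ℝ := fun θ => c θ / S with hwdef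
  have hwΔ : w ∈ Δ := by
    constructor
    · exact fun θ => div_nonneg (hc_nonneg θ) hc_sum_pos.le
    · rw [hwdef]
      simp only
      rw [← Finset.sum_div, ← hSdef, div_self hc_sum_pos.ne']
  -- key lower bound
  have hVS : ∀ p ∈ P, V * S ≤ ∑ θ, f θ p * c θ := by
    intro p hp
    have h1 : u ≤ ∑ θ, f θ p * c θ := by
      have := hCu (fun θ => f θ p) ⟨p, hp, fun θ => le_refl _⟩
      rwa [hφx] at this
    have h2 : ∀ ε > (0:ℝ), (V - ε) * S < u := by
      intro ε hε
      have := hBu _ (hBmem ε hε)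
      rw [hφx] at this
      calc (V - ε) * S = ∑ θ, (V - ε) * c θ := by rw [Finset.mul_sum]
        _ < u := this
    have h3 : V * S ≤ u := by
      by_contra hlt
      push_neg at hlt
      have hεpos : 0 < (V * S - u) / S := div_pos (by linarith) hc_sum_pos
      have := h2 _ hεpos
      have heq : (V - (V * S - u) / S) * S = u := by
        field_simp
        ring
      linarith [heq ▸ this]
    linarith
  have hkey : ∀ p ∈ P, V ≤ (∑ i, p i * b i) + ∑ θ, w θ * surplus (D θ) p := by
    intro p hp
    have heq : (∑ i, p i * b i) + ∑ θ, w θ * surplus (D θ) p = ∑ θ, w θ * f θ p := by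
      simp only [hfdef, mul_add, Finset.sum_add_distrib, ← Finset.sum_mul, hwΔ.2, one_mul]
    rw [heq]
    have h1 : ∑ θ, w θ * f θ p = (∑ θ, f θ p * c θ) / S := by
      rw [Finset.sum_div]
      exact Finset.sum_congr rfl fun θ _ => by rw [hwdef]; ring
    rw [h1, le_div_iff₀ hc_sum_pos]
    exact hVS p hp
  have hlower : V ≤ sInf ((fun p => (∑ i, p i * b i) + ∑ θ, w θ * surplus (D θ) p) '' P) := by
    apply le_csInf (hPne.image _)
    rintro x ⟨p, hp, rfl⟩
    exact hkey p hp
  -- conclude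
  apply le_antisymm
  · apply csSup_le ((Set.nonempty_of_mem hwΔ).image _)
    rintro x ⟨w', hw', rfl⟩
    exact hupper w' hw'
  · have hbdd : BddAbove ((fun w' => sInf ((fun p => (∑ i, p i * b i) + ∑ θ, w' θ * surplus (D θ) p) '' P)) '' Δ) :=
      ⟨V, by rintro x ⟨w', hw', rfl⟩; exact hupper w' hw'⟩
    have hmem : sInf ((fun p => (∑ i, p i * b i) + ∑ θ, w θ * surplus (D θ) p) '' P)
        ∈ (fun w' => sInf ((fun p => (∑ i, p i * b i) + ∑ θ, w' θ * surplus (D θ) p) '' P)) '' Δ :=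
      ⟨w, hwΔ, rfl⟩
    exact hlower.trans (le_csSup hbdd hmem)
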